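/- Let D be a loopless digon-free digraph on n vertices, let 2 ≤ k ≤ min{l, n−1}, and let α and β be acyclic l-colorings of D such that β has one color class C_1^β of size 2 and k−1 singleton color classes C_2^β,…,C_k^β, and α(u) = β(u) for every vertex u outside C_1^β ∪ ⋯ ∪ C_k^β. Then d(α,β) ≤ k+1 in the dicoloring graph of D. -/

import Mathlib

/-- A set `S` of vertices induces an acyclic subdigraph of the digraph with
arc relation `A`: there is no directed cycle within `S`. -/
def AcyclicOn {V : Type*} (A : V → V → Prop) (S : Set V) : Prop :=
  ∀ v, ¬ Relation.TransGen (fun x y => x ∈ S ∧ y ∈ S ∧ A x y) v v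

/-- An acyclic `k`-coloring: every color class induces an acyclic subdigraph. -/
def IsAcyclicColoring {V : Type*} (A : V → V → Prop) (k : ℕ) (α : V → Fin k) : Prop :=
  ∀ c : Fin k, AcyclicOn A {v | α v = c}

/-- The `k`-dicoloring graph: vertices are acyclic `k`-colorings, two colorings
adjacent when they differ on exactly one vertex. -/
def DicolGraph {V : Type*} (A : V → V → Prop) (k : ℕ) :
    SimpleGraph {α : V → Fin k // IsAcyclicColoring A k α} where
  Adj α β := ∃! v, α.1 v ≠ β.1 v
  symm := ⟨by
    rintro α β ⟨v, hv, hu⟩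
    exact ⟨v, Ne.symm hv, fun w hw => hu w (Ne.symm hw)⟩⟩
  loopless := ⟨by
    rintro α ⟨v, hv, -⟩
    exact hv rfl⟩

/-- The cyclic circulant tournament on `ZMod (2n+1)` with jumps `1,…,n`. -/
def CycArc (n : ℕ) (a b : ZMod (2*n+1)) : Prop := (b - a).val ∈ Finset.Icc 1 n

/-- The tournament obtained from `CycArc n` by reversing the jump `n`. -/
def RevArc (n : ℕ) (a b : ZMod (2*n+1)) : Prop :=
  (b - a).val ∈ Finset.Icc 1 (n-1) ∨ (b - a).val = n + 1

/-- A forbidden triangle in `C_{2n+1}⟨n⟩`. -/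
def ForbiddenTriangle (n : ℕ) (S : Set (ZMod (2*n+1))) : Prop :=
  ∃ i : ZMod (2*n+1), S = {i, i + n, i + n + 1}

section Aux

variable {V : Type*} {A : V → V → Prop}

lemma acyclicOn_mono {s t : Set V} (h : AcyclicOn A t) (hst : s ⊆ t) : AcyclicOn A s := by
  intro v hv
  exact h v (Relation.TransGen.mono (p := fun x y => x ∈ t ∧ y ∈ t ∧ A x y) (fun x y hxy => ⟨hst hxy.1, hst hxy.2.1, hxy.2.2⟩) v v hv)

lemma acyclicOn_pair (hloop : ∀ v, ¬ A v v) (hdigon : ∀ u v, A u v → ¬ A v u)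
    (a b : V) : AcyclicOn A {a, b} := by
  intro v hv
  have hcomp : ∀ x y z : V,
      (x ∈ ({a, b} : Set V) ∧ y ∈ ({a, b} : Set V) ∧ A x y) →
      (y ∈ ({a, b} : Set V) ∧ z ∈ ({a, b} : Set V) ∧ A y z) → False := by
    rintro x y z ⟨hx, hy, hxy⟩ ⟨-, hz, hyz⟩
    have hxy' : x ≠ y := fun h => hloop y (h ▸ hxy)
    have hyz' : y ≠ z := fun h => hloop z (h ▸ hyz)
    have hxz : x = z := by
      simp only [Set.mem_insert_iff, Set.mem_singleton_iff] at hx hy hz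
      rcases hx with rfl | rfl <;> rcases hy with rfl | rfl <;> rcases hz with rfl | rfl <;>
        first
          | rfl
          | (exact absurd rfl hxy')
          | (exact absurd rfl hyz')
    subst hxz
    exact hdigon x y hxy hyz
  have key : ∀ ⦃x y : V⦄,
      Relation.TransGen (fun x y => x ∈ ({a, b} : Set V) ∧ y ∈ ({a, b} : Set V) ∧ A x y) x y →
      (x ∈ ({a, b} : Set V) ∧ y ∈ ({a, b} : Set V) ∧ A x y) := by
    intro x y hxy
    induction hxy with
    | single h => exact h
    | tail h1 h2 ih => exact (hcomp _ _ _ ih h2).elim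
  exact hloop v (key hv).2.2

lemma step_exists [Fintype V] [DecidableEq V] {l : ℕ} (α β : V → Fin l) (c0 : Fin l)
    (hK0 : (Finset.univ.filter (fun v => β v = c0)).card = 2)
    (hclass : ∀ v : V, α v ≠ β v →
      β v = c0 ∨ (Finset.univ.filter (fun w => β w = β v)).card = 1)
    (R : Finset V) (hne : R.Nonempty) (hRD : ∀ v ∈ R, α v ≠ β v) :
    ∃ v ∈ R, (Finset.univ.filter
      (fun w => w ≠ v ∧ (if w ∈ R then α w else β w) = β v)).card ≤ 1 := by
  by_contra hcon
  push_neg at hcon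
  have hstuck : ∀ v ∈ R, 2 ≤ (Finset.univ.filter
      (fun w => w ≠ v ∧ (if w ∈ R then α w else β w) = β v)).card :=
    fun v hv => hcon v hv
  have huniq : ∀ v ∈ R, β v ≠ c0 → ∀ w : V, β w = β v → w = v := by
    intro v hv hvc w hw
    rcases hclass v (hRD v hv) with h | h
    · exact absurd h hvc
    · obtain ⟨a, ha⟩ := Finset.card_eq_one.mp h
      have h1 : w ∈ Finset.univ.filter (fun w => β w = β v) := by simp [hw]
      have h2 : v ∈ Finset.univ.filter (fun w => β w = β v) := by simp
      rw [ha, Finset.mem_singleton] at h1 h2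
      rw [h1, h2]
  have hblockeq : ∀ v ∈ R, β v ≠ c0 →
      (Finset.univ.filter (fun w => w ≠ v ∧ (if w ∈ R then α w else β w) = β v))
        = R.filter (fun w => α w = β v) := by
    intro v hv hvc
    ext w
    simp only [Finset.mem_filter, Finset.mem_univ, true_and]
    constructor
    · rintro ⟨hwv, hcur⟩
      by_cases hwR : w ∈ R
      · rw [if_pos hwR] at hcur; exact ⟨hwR, hcur⟩
      · rw [if_neg hwR] at hcur
        exact absurd (huniq v hv hvc w hcur) hwv
    · rintro ⟨hwR, hα⟩
      have hwv : w ≠ v := by rintro rfl; exact hRD w hwR hα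
      rw [if_pos hwR]
      exact ⟨hwv, hα⟩
  set Ru := R.filter (fun v => β v = c0) with hRu
  set Rs := R.filter (fun v => ¬ β v = c0) with hRs
  have hsplit : Ru.card + Rs.card = R.card :=
    Finset.card_filter_add_card_filter_not _
  have hRuK : Ru ⊆ Finset.univ.filter (fun v => β v = c0) := by
    intro w hw
    rw [hRu, Finset.mem_filter] at hw
    simp [hw.2]
  have hq2 : Ru.card ≤ 2 := hK0 ▸ Finset.card_le_card hRuK
  have hfib : ∀ v ∈ Rs, 2 ≤ (R.filter (fun w => α w = β v)).card := by
    intro v hv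
    rw [hRs, Finset.mem_filter] at hv
    rw [← hblockeq v hv.1 hv.2]
    exact hstuck v hv.1
  set U := Rs.biUnion (fun v => R.filter (fun w => α w = β v)) with hU
  have hUcard : 2 * Rs.card ≤ U.card := by
    rw [hU, Finset.card_biUnion]
    · calc 2 * Rs.card = ∑ _v ∈ Rs, 2 := by rw [Finset.sum_const, smul_eq_mul, mul_comm]
        _ ≤ ∑ v ∈ Rs, (R.filter (fun w => α w = β v)).card := Finset.sum_le_sum hfib
    · intro x hx y hy hxy
      rw [Function.onFun, Finset.disjoint_left]
      intro w hwx hwy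
      rw [Finset.mem_filter] at hwx hwy
      have hx' := hx; rw [hRs, Finset.mem_coe, Finset.mem_filter] at hx'
      have hbxy : β y = β x := by rw [← hwx.2, hwy.2]
      exact hxy ((huniq x hx'.1 hx'.2 y hbxy).symm)
  have hUR : U ⊆ R := Finset.biUnion_subset.mpr (fun v _ => Finset.filter_subset _ _)
  set f0 := R.filter (fun w => α w = c0) with hf0
  have hdisj0 : Disjoint f0 U := by
    rw [Finset.disjoint_left]
    intro w hw hwU
    rw [hf0, Finset.mem_filter] at hw
    rw [hU, Finset.mem_biUnion] at hwU
    obtain ⟨v, hv, hwv⟩ := hwU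
    rw [Finset.mem_filter] at hwv
    rw [hRs, Finset.mem_filter] at hv
    exact hv.2 (by rw [← hwv.2, hw.2])
  have hunion : f0.card + U.card ≤ R.card := by
    rw [← Finset.card_union_of_disjoint hdisj0]
    exact Finset.card_le_card (Finset.union_subset (Finset.filter_subset _ _) hUR)
  by_cases hq : Ru.card = 0
  · have h2 : 2 * Rs.card ≤ R.card := le_trans hUcard (Finset.card_le_card hUR)
    have hRne := Finset.card_pos.mpr hne
    omega
  · obtain ⟨u, hu⟩ : Ru.Nonempty := Finset.card_pos.mp (by omega)
    have hu' := hu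
    rw [hRu, Finset.mem_filter] at hu'
    obtain ⟨huR, huc⟩ := hu'
    have hBsub : (Finset.univ.filter (fun w => w ≠ u ∧ (if w ∈ R then α w else β w) = β u))
        ⊆ f0 ∪ ((Finset.univ.filter (fun v => β v = c0)) \ Ru) := by
      intro w hw
      simp only [Finset.mem_filter, Finset.mem_univ, true_and] at hw
      obtain ⟨hwu, hcur⟩ := hw
      by_cases hwR : w ∈ R
      · rw [if_pos hwR] at hcur
        refine Finset.mem_union_left _ ?_
        rw [hf0, Finset.mem_filter]
        exact ⟨hwR, by rw [hcur, huc]⟩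
      · rw [if_neg hwR] at hcur
        refine Finset.mem_union_right _ ?_
        rw [Finset.mem_sdiff]
        refine ⟨by simp [hcur, huc], ?_⟩
        intro hwRu
        rw [hRu, Finset.mem_filter] at hwRu
        exact hwR hwRu.1
    have hsdcard : ((Finset.univ.filter (fun v => β v = c0)) \ Ru).card = 2 - Ru.card := by
      rw [Finset.card_sdiff_of_subset hRuK, hK0]
    have hB : 2 ≤ f0.card + (2 - Ru.card) := by
      calc 2 ≤ (Finset.univ.filter
            (fun w => w ≠ u ∧ (if w ∈ R then α w else β w) = β u)).card := hstuck u huR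
        _ ≤ (f0 ∪ ((Finset.univ.filter (fun v => β v = c0)) \ Ru)).card :=
            Finset.card_le_card hBsub
        _ ≤ f0.card + ((Finset.univ.filter (fun v => β v = c0)) \ Ru).card :=
            Finset.card_union_le _ _
        _ = f0.card + (2 - Ru.card) := by rw [hsdcard]
    have hf0q : Ru.card ≤ f0.card := by omega
    have hpz : Rs.card = 0 := by omega
    have hf0pos : 0 < f0.card := by omega
    obtain ⟨w, hw⟩ := Finset.card_pos.mp hf0pos
    rw [hf0, Finset.mem_filter] at hw
    have hwRs : w ∉ Rs := by
      rw [Finset.card_eq_zero.mp hpz]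
      exact Finset.notMem_empty w
    have hwc : β w = c0 := by
      by_contra hbc
      exact hwRs (by rw [hRs, Finset.mem_filter]; exact ⟨hw.1, hbc⟩)
    exact hRD w hw.1 (hw.2.trans hwc.symm)

lemma walk_aux [Fintype V] [DecidableEq V]
    (hloop : ∀ v, ¬ A v v) (hdigon : ∀ u v, A u v → ¬ A v u)
    {l : ℕ} (α β : V → Fin l) (hβ : IsAcyclicColoring A l β) (c0 : Fin l)
    (hK0 : (Finset.univ.filter (fun v => β v = c0)).card = 2)
    (hclass : ∀ v : V, α v ≠ β v →
      β v = c0 ∨ (Finset.univ.filter (fun w => β w = β v)).card = 1) :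
    ∀ (m : ℕ) (R : Finset V), R.card = m → (∀ v ∈ R, α v ≠ β v) →
      ∀ (h : IsAcyclicColoring A l (fun v => if v ∈ R then α v else β v)),
      ∃ p : (DicolGraph A l).Walk ⟨_, h⟩ ⟨β, hβ⟩, p.length ≤ m := by
  intro m
  induction m with
  | zero =>
    intro R hR _ h
    have hRe : R = ∅ := Finset.card_eq_zero.mp hR
    subst hRe
    have hfun : (fun v => if v ∈ (∅ : Finset V) then α v else β v) = β :=
      funext fun v => if_neg (Finset.notMem_empty v)
    have heq : (⟨β, hβ⟩ : {x : V → Fin l // IsAcyclicColoring A l x}) = ⟨_, h⟩ :=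
      Subtype.ext hfun.symm
    exact ⟨SimpleGraph.Walk.nil.copy heq rfl, by simp⟩
  | succ m ih =>
    intro R hR hRD h
    have hne : R.Nonempty := Finset.card_pos.mp (by omega)
    obtain ⟨v, hvR, hblock⟩ := step_exists α β c0 hK0 hclass R hne hRD
    have hvnotR : v ∉ R.erase v := fun hc => (Finset.mem_erase.mp hc).1 rfl
    have hγ'def : ∀ w, w ≠ v →
        (if w ∈ R.erase v then α w else β w) = (if w ∈ R then α w else β w) := by
      intro w hw
      by_cases hwR : w ∈ R <;> simp [Finset.mem_erase, hw, hwR]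
    have hNE : Nonempty V := ⟨v⟩
    have h' : IsAcyclicColoring A l (fun w => if w ∈ R.erase v then α w else β w) := by
      intro c
      by_cases hc : c = β v
      · subst hc
        obtain ⟨b, hb⟩ := Finset.card_le_one_iff_subset_singleton.mp hblock
        have hsub : {w | (if w ∈ R.erase v then α w else β w) = β v} ⊆
            ({v, b} : Set V) := by
          intro w hw
          simp only [Set.mem_setOf_eq] at hw
          by_cases hwv : w = v
          · exact Or.inl hwv
          · rw [hγ'def w hwv] at hw
            have : w ∈ Finset.univ.filter
                (fun w => w ≠ v ∧ (if w ∈ R then α w else β w) = β v) := by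
              simp [hwv, hw]
            have := hb this
            rw [Finset.mem_singleton] at this
            exact Or.inr this
        exact acyclicOn_mono (acyclicOn_pair hloop hdigon v b) hsub
      · refine acyclicOn_mono (h c) ?_
        intro w hw
        simp only [Set.mem_setOf_eq] at hw ⊢
        by_cases hwv : w = v
        · subst hwv
          rw [if_neg hvnotR] at hw
          exact absurd hw (fun he => hc he.symm)
        · rw [← hγ'def w hwv]
          exact hw
    have hadj : (DicolGraph A l).Adj ⟨_, h⟩ ⟨_, h'⟩ := by
      refine ⟨v, ?_, ?_⟩
      · show (if v ∈ R then α v else β v) ≠ (if v ∈ R.erase v then α v else β v)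
        rw [if_pos hvR, if_neg hvnotR]
        exact hRD v hvR
      · intro w hw
        by_contra hwv
        exact hw (hγ'def w hwv).symm
    obtain ⟨p, hp⟩ := ih (R.erase v)
      (by rw [Finset.card_erase_of_mem hvR, hR]; rfl)
      (fun w hw => hRD w (Finset.mem_of_mem_erase hw)) h'
    refine ⟨SimpleGraph.Walk.cons hadj p, ?_⟩
    rw [SimpleGraph.Walk.length_cons]
    omega

end Aux

theorem stmt2 {V : Type*} [Fintype V] (n : ℕ) (hcard : Fintype.card V = n)
    (A : V → V → Prop) (hloop : ∀ v, ¬ A v v) (hdigon : ∀ u v, A u v → ¬ A v u)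
    (k l : ℕ) (hk2 : 2 ≤ k) (hkl : k ≤ l) (hkn : k ≤ n - 1)
    (α β : V → Fin l)
    (hα : IsAcyclicColoring A l α) (hβ : IsAcyclicColoring A l β)
    (C : Fin k → Fin l) (hCinj : Function.Injective C)
    (hbig : Set.ncard {v | β v = C ⟨0, by omega⟩} = 2)
    (hsing : ∀ i : Fin k, i ≠ ⟨0, by omega⟩ → Set.ncard {v | β v = C i} = 1)
    (hagree : ∀ u : V, (∀ i : Fin k, β u ≠ C i) → α u = β u) :
    (DicolGraph A l).Reachable ⟨α, hα⟩ ⟨β, hβ⟩ ∧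
      (DicolGraph A l).dist ⟨α, hα⟩ ⟨β, hβ⟩ ≤ k + 1 := by
  classical
  set i0 : Fin k := ⟨0, by omega⟩ with hi0
  set c0 : Fin l := C i0 with hc0
  have hK0 : (Finset.univ.filter (fun v => β v = c0)).card = 2 := by
    have hset : ({v | β v = C i0} : Set V) = ↑(Finset.univ.filter (fun v => β v = c0)) := by
      ext w; simp [hc0]
    have hb : Set.ncard {v | β v = C i0} = 2 := hbig
    rw [hset, Set.ncard_coe_finset] at hb
    exact hb
  have hKi : ∀ i : Fin k, i ≠ i0 → (Finset.univ.filter (fun v => β v = C i)).card = 1 := by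
    intro i hi
    have hs := hsing i hi
    have hset : ({v | β v = C i} : Set V)
        = ↑(Finset.univ.filter (fun v => β v = C i)) := by
      ext w; simp
    rw [hset, Set.ncard_coe_finset] at hs
    exact hs
  have hrange : ∀ v : V, α v ≠ β v → ∃ i, β v = C i := by
    intro v hv
    by_contra hno
    push_neg at hno
    exact hv (hagree v hno)
  have hclass : ∀ v : V, α v ≠ β v →
      β v = c0 ∨ (Finset.univ.filter (fun w => β w = β v)).card = 1 := by
    intro v hv
    obtain ⟨i, hi⟩ := hrange v hv
    by_cases hic : β v = c0
    · exact Or.inl hic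
    · right
      have hii0 : i ≠ i0 := by
        rintro rfl
        exact hic (by rw [hi, hc0])
      have := hKi i hii0
      simp only [hi]
      exact this
  set D : Finset V := Finset.univ.filter (fun v => α v ≠ β v) with hD
  have hDmem : ∀ v ∈ D, α v ≠ β v := by
    intro v hv
    rw [hD, Finset.mem_filter] at hv
    exact hv.2
  have hγ : (fun v => if v ∈ D then α v else β v) = α := by
    funext v
    by_cases hv : v ∈ D
    · rw [if_pos hv]
    · rw [if_neg hv]
      rw [hD, Finset.mem_filter] at hv
      push_neg at hv
      exact (hv (Finset.mem_univ v)).symm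
  have h : IsAcyclicColoring A l (fun v => if v ∈ D then α v else β v) := by
    rw [hγ]; exact hα
  obtain ⟨p, hp⟩ := walk_aux hloop hdigon α β hβ c0 hK0 hclass D.card D rfl hDmem h
  -- card bound
  have hsub : D ⊆ (Finset.univ : Finset (Fin k)).biUnion
      (fun i => Finset.univ.filter (fun v => β v = C i)) := by
    intro v hv
    obtain ⟨i, hi⟩ := hrange v (hDmem v hv)
    exact Finset.mem_biUnion.mpr ⟨i, Finset.mem_univ i, by simp [hi]⟩
  have hsum : ∑ i : Fin k, (Finset.univ.filter (fun v => β v = C i)).card = k + 1 := by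
    rw [← Finset.sum_erase_add _ _ (Finset.mem_univ i0)]
    have h1 : ∑ i ∈ Finset.univ.erase i0, (Finset.univ.filter (fun v => β v = C i)).card
        = ∑ _i ∈ Finset.univ.erase i0, 1 :=
      Finset.sum_congr rfl (fun i hi => hKi i (Finset.mem_erase.mp hi).1)
    rw [h1, Finset.sum_const, smul_eq_mul, mul_one,
      Finset.card_erase_of_mem (Finset.mem_univ i0), Finset.card_univ, Fintype.card_fin, hK0]
    omega
  have hDk : D.card ≤ k + 1 := by
    calc D.card ≤ ((Finset.univ : Finset (Fin k)).biUnion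
          (fun i => Finset.univ.filter (fun v => β v = C i))).card :=
        Finset.card_le_card hsub
      _ ≤ ∑ i : Fin k, (Finset.univ.filter (fun v => β v = C i)).card :=
        Finset.card_biUnion_le
      _ = k + 1 := hsum
  have heq : (⟨(fun v => if v ∈ D then α v else β v), h⟩ :
      {x : V → Fin l // IsAcyclicColoring A l x}) = ⟨α, hα⟩ := Subtype.ext hγ
  let p' := p.copy heq rfl
  refine ⟨⟨p'⟩, ?_⟩
  calc (DicolGraph A l).dist ⟨α, hα⟩ ⟨β, hβ⟩ ≤ p'.length := SimpleGraph.dist_le p'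
    _ = p.length := SimpleGraph.Walk.length_copy _ _ _
    _ ≤ D.card := hp
    _ ≤ k + 1 := hDk
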